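/- For all positive integers m, n and all real x, y, the partial derivatives ∂φ_{m,n}/∂x and ∂φ_{m,n}/∂y are orthogonal with respect to the real inner product on ℂ³ ≅ ℝ⁶, i.e. the real part of the Hermitian inner product ⟨∂φ_{m,n}/∂x, ∂φ_{m,n}/∂y⟩ vanishes. -/

import Mathlib

open Real Complex

/-- The doubly periodic immersion `φ_{m,n} : ℝ² → ℂ³` of Karpukhin's family of
minimal tori of revolution in `S⁵ ⊂ ℂ³`. -/
noncomputable def phiMN (m n : ℕ) (x y : ℝ) : Fin 3 → ℂ :=
  ![(Real.sqrt (((m : ℝ) + n) / (2 * m + n)) : ℂ) * Complex.exp (Complex.I * m * y) *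
      (Real.sin x : ℂ),
    (Real.sqrt (((m : ℝ) + n) / (m + 2 * n)) : ℂ) * Complex.exp (Complex.I * n * y) *
      (Real.cos x : ℂ),
    (Real.sqrt ((n : ℝ) * Real.cos x ^ 2 / (m + 2 * n) +
        (m : ℝ) * Real.sin x ^ 2 / (2 * m + n)) : ℂ) *
      Complex.exp (-(Complex.I * ((m : ℝ) + n) * y))]

/-- Real part of `conj (a·E) · (b·i·E)` vanishes when `a b` are real. -/
lemma reHelper (a b : ℝ) (E : ℂ) :
    ((starRingEnd ℂ) ((a : ℂ) * E) * ((b : ℂ) * Complex.I * E)).re = 0 := by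
  have h : (starRingEnd ℂ) ((a : ℂ) * E) * ((b : ℂ) * Complex.I * E)
      = ((a * b * Complex.normSq E : ℝ) : ℂ) * Complex.I := by
    rw [map_mul, Complex.conj_ofReal]
    push_cast
    rw [Complex.normSq_eq_conj_mul_self]
    ring
  rw [h]
  simp

/-- derivative in `s` of `c * exp (w * s) * g`. -/
lemma deriv_y_form (c g w : ℂ) (y : ℝ) :
    deriv (fun s : ℝ => c * Complex.exp (w * (s : ℂ)) * g) y
      = c * (w * Complex.exp (w * y)) * g := by
  have h1 : HasDerivAt (fun z : ℂ => Complex.exp (w * z)) (Complex.exp (w * y) * w) (y : ℂ) :=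
    ((hasDerivAt_id ((y : ℝ) : ℂ)).const_mul w).cexp.congr_deriv (by simp [id_eq])
  have h2 : HasDerivAt (fun s : ℝ => Complex.exp (w * (s : ℂ))) (Complex.exp (w * y) * w) y :=
    h1.comp_ofReal
  have := ((h2.const_mul c).mul_const g).deriv
  rw [this]; ring

/-- derivative in `t` of `c * (g t : ℂ)`. -/
lemma deriv_x_form (c : ℂ) {g : ℝ → ℝ} {g' x : ℝ} (hg : HasDerivAt g g' x) :
    deriv (fun t : ℝ => c * ((g t : ℝ) : ℂ)) x = c * (g' : ℂ) :=
  ((hg.ofReal_comp).const_mul c).deriv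

lemma deriv_x_form' (c : ℂ) {g : ℝ → ℝ} {g' x : ℝ} (hg : HasDerivAt g g' x) :
    deriv (fun t : ℝ => ((g t : ℝ) : ℂ) * c) x = (g' : ℂ) * c :=
  ((hg.ofReal_comp).mul_const c).deriv

theorem phiMN_partials_orthogonal (m n : ℕ) (hm : 0 < m) (hn : 0 < n) (x y : ℝ) :
    (∑ j : Fin 3,
        (starRingEnd ℂ) (deriv (fun t : ℝ => phiMN m n t y j) x) *
          deriv (fun s : ℝ => phiMN m n x s j) y).re = 0 := by
  set C0 : ℝ := Real.sqrt (((m : ℝ) + n) / (2 * m + n)) with hC0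
  set C1 : ℝ := Real.sqrt (((m : ℝ) + n) / (m + 2 * n)) with hC1
  set Q : ℝ → ℝ := fun t =>
    (n : ℝ) * Real.cos t ^ 2 / (m + 2 * n) + (m : ℝ) * Real.sin t ^ 2 / (2 * m + n) with hQ
  -- positivity of Q x
  have hA : (0 : ℝ) < (m : ℝ) + 2 * n := by positivity
  have hB : (0 : ℝ) < 2 * (m : ℝ) + n := by positivity
  have hm' : (0 : ℝ) < (m : ℝ) := by exact_mod_cast hm
  have hn' : (0 : ℝ) < (n : ℝ) := by exact_mod_cast hn
  have hQpos : 0 < Q x := by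
    have hpy : Real.sin x ^ 2 + Real.cos x ^ 2 = 1 := Real.sin_sq_add_cos_sq x
    have h1 : (0 : ℝ) < (n : ℝ) / ((m : ℝ) + 2 * n) := by positivity
    have h2 : (0 : ℝ) < (m : ℝ) / (2 * (m : ℝ) + n) := by positivity
    have e1 : Q x = (n : ℝ) / ((m : ℝ) + 2 * n) * Real.cos x ^ 2
        + (m : ℝ) / (2 * (m : ℝ) + n) * Real.sin x ^ 2 := by
      simp only [hQ]; ring
    rw [e1]
    rcases le_total ((n : ℝ) / ((m : ℝ) + 2 * n)) ((m : ℝ) / (2 * (m : ℝ) + n)) with h | h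
    · nlinarith [sq_nonneg (Real.sin x), sq_nonneg (Real.cos x)]
    · nlinarith [sq_nonneg (Real.sin x), sq_nonneg (Real.cos x)]
  have hQdiff : DifferentiableAt ℝ Q x := by
    simp only [hQ]; fun_prop
  have hgdiff : DifferentiableAt ℝ (fun t => Real.sqrt (Q t)) x :=
    hQdiff.sqrt hQpos.ne'
  set d : ℝ := deriv (fun t => Real.sqrt (Q t)) x with hd
  have hgd : HasDerivAt (fun t => Real.sqrt (Q t)) d x := hgdiff.hasDerivAt
  rw [Fin.sum_univ_three]
  -- reduce components
  have h0x : deriv (fun t : ℝ => phiMN m n t y 0) x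
      = (C0 : ℂ) * Complex.exp (Complex.I * m * y) * (Real.cos x : ℂ) := by
    simp only [phiMN, Matrix.cons_val_zero]
    exact deriv_x_form _ (Real.hasDerivAt_sin x)
  have h1x : deriv (fun t : ℝ => phiMN m n t y 1) x
      = (C1 : ℂ) * Complex.exp (Complex.I * n * y) * (Complex.ofReal (-Real.sin x)) := by
    simp only [phiMN, Matrix.cons_val_one, Matrix.head_cons]
    exact deriv_x_form _ (Real.hasDerivAt_cos x)
  have h2x : deriv (fun t : ℝ => phiMN m n t y 2) x
      = (d : ℂ) * Complex.exp (-(Complex.I * ((m : ℝ) + n) * y)) := by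
    simp only [phiMN, Matrix.cons_val_two, Matrix.tail_cons, Matrix.head_cons]
    exact deriv_x_form' _ hgd
  have h0y : deriv (fun s : ℝ => phiMN m n x s 0) y
      = (C0 : ℂ) * ((Complex.I * m) * Complex.exp (Complex.I * m * y)) * (Real.sin x : ℂ) := by
    simp only [phiMN, Matrix.cons_val_zero]
    rw [← hC0]
    have := deriv_y_form (C0 : ℂ) (Real.sin x : ℂ) (Complex.I * (m : ℂ)) y
    simpa [mul_assoc] using this
  have h1y : deriv (fun s : ℝ => phiMN m n x s 1) y
      = (C1 : ℂ) * ((Complex.I * n) * Complex.exp (Complex.I * n * y)) * (Real.cos x : ℂ) := by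
    simp only [phiMN, Matrix.cons_val_one, Matrix.head_cons]
    rw [← hC1]
    have := deriv_y_form (C1 : ℂ) (Real.cos x : ℂ) (Complex.I * (n : ℂ)) y
    simpa [mul_assoc] using this
  have h2y : deriv (fun s : ℝ => phiMN m n x s 2) y
      = (Real.sqrt (Q x) : ℂ) * ((-(Complex.I * (((m : ℝ) : ℂ) + (n : ℂ))))
          * Complex.exp (-(Complex.I * (((m : ℝ) : ℂ) + (n : ℂ)) * y))) * 1 := by
    simp only [phiMN, Matrix.cons_val_two, Matrix.tail_cons, Matrix.head_cons]
    have h := deriv_y_form ((Real.sqrt (Q x)) : ℂ) 1 (-(Complex.I * (((m : ℝ) : ℂ) + (n : ℂ)))) y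
    have efun : (fun s : ℝ => (Real.sqrt ((n : ℝ) * Real.cos x ^ 2 / (m + 2 * n) +
          (m : ℝ) * Real.sin x ^ 2 / (2 * m + n)) : ℂ) *
            Complex.exp (-(Complex.I * (((m : ℝ) : ℂ) + (n : ℂ)) * s)))
        = fun s : ℝ => ((Real.sqrt (Q x)) : ℂ) *
            Complex.exp ((-(Complex.I * (((m : ℝ) : ℂ) + (n : ℂ)))) * s) * 1 := by
      funext s
      simp only [hQ, mul_one]
      congr 2
      ring
    rw [efun, h, mul_one, mul_one]
    congr 2
    ring
  rw [h0x, h1x, h2x, h0y, h1y, h2y]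
  have e0 : ((C0 : ℂ) * Complex.exp (Complex.I * m * y) * (Real.cos x : ℂ))
      = ((C0 * Real.cos x : ℝ) : ℂ) * Complex.exp (Complex.I * m * y) := by push_cast; ring
  have f0 : ((C0 : ℂ) * ((Complex.I * m) * Complex.exp (Complex.I * m * y)) * (Real.sin x : ℂ))
      = ((C0 * m * Real.sin x : ℝ) : ℂ) * Complex.I * Complex.exp (Complex.I * m * y) := by
    push_cast; ring
  have e1 : ((C1 : ℂ) * Complex.exp (Complex.I * n * y) * (Complex.ofReal (-Real.sin x)))
      = ((C1 * (-Real.sin x) : ℝ) : ℂ) * Complex.exp (Complex.I * n * y) := by push_cast; ring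
  have f1 : ((C1 : ℂ) * ((Complex.I * n) * Complex.exp (Complex.I * n * y)) * (Real.cos x : ℂ))
      = ((C1 * n * Real.cos x : ℝ) : ℂ) * Complex.I * Complex.exp (Complex.I * n * y) := by
    push_cast; ring
  have e2 : ((d : ℂ) * Complex.exp (-(Complex.I * ((m : ℝ) + n) * y)))
      = ((d : ℝ) : ℂ) * Complex.exp (-(Complex.I * ((m : ℝ) + n) * y)) := rfl
  have f2 : ((Real.sqrt (Q x) : ℂ) * ((-(Complex.I * ((m : ℝ) + n)))
        * Complex.exp (-(Complex.I * ((m : ℝ) + n) * y))) * 1)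
      = ((Real.sqrt (Q x) * (-((m : ℝ) + n)) : ℝ) : ℂ) * Complex.I
          * Complex.exp (-(Complex.I * ((m : ℝ) + n) * y)) := by push_cast; ring
  rw [e0, f0, e1, f1, e2, f2]
  rw [Complex.add_re, Complex.add_re, reHelper, reHelper, reHelper]
  norm_num
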